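/- The unknown-SNR target amplitude density g_a(a|d₁,d₂) obtained by averaging the Rayleigh density g_d(a) = (a/(1+d))·exp(−a²/(2(1+d))) over d ∈ [d₁,d₂] with respect to the density 1/((1+d)·(ln(1+d₂) − ln(1+d₁))) equals 2·(exp(−a²/(2(1+d₂))) − exp(−a²/(2(1+d₁))))/(a·(ln(1+d₂) − ln(1+d₁))) for all a > 0 and 0 < d₁ < d₂. -/

import Mathlib

open MeasureTheory Real

/-- Averaging the Rayleigh density g_d(a) over d ∈ [d₁,d₂] with density
1/((1+d)(ln(1+d₂)−ln(1+d₁))) yields the unknown-SNR amplitude density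
2(exp(−a²/(2(1+d₂))) − exp(−a²/(2(1+d₁))))/(a(ln(1+d₂)−ln(1+d₁))). -/
theorem unknown_snr_density_formula (a d₁ d₂ : ℝ) (ha : 0 < a) (h1 : 0 < d₁) (h12 : d₁ < d₂) :
    ∫ d in Set.Icc d₁ d₂,
        ((a/(1+d)) * Real.exp (-a^2/(2*(1+d)))) *
          (1/((1+d) * (Real.log (1+d₂) - Real.log (1+d₁))))
      = 2 * (Real.exp (-a^2/(2*(1+d₂))) - Real.exp (-a^2/(2*(1+d₁))))
          / (a * (Real.log (1+d₂) - Real.log (1+d₁))) := by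
  set L : ℝ := Real.log (1+d₂) - Real.log (1+d₁) with hL
  have hL0 : 0 < L := by
    have : Real.log (1+d₁) < Real.log (1+d₂) :=
      Real.log_lt_log (by linarith) (by linarith)
    simp [hL]; linarith
  -- rewrite integrand
  have hcongr : ∀ d ∈ Set.Icc d₁ d₂,
      ((a/(1+d)) * Real.exp (-a^2/(2*(1+d)))) * (1/((1+d) * L))
        = (1/L) * ((a/(1+d)^2) * Real.exp (-a^2/(2*(1+d)))) := by
    intro d hd
    have hd0 : (1:ℝ)+d ≠ 0 := by
      have := hd.1; nlinarith
    field_simp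
  rw [MeasureTheory.setIntegral_congr_fun measurableSet_Icc hcongr,
    MeasureTheory.integral_const_mul, MeasureTheory.integral_Icc_eq_integral_Ioc,
    ← intervalIntegral.integral_of_le h12.le]
  have hderiv : ∀ d ∈ Set.uIcc d₁ d₂,
      HasDerivAt (fun x => (2/a) * Real.exp (-a^2/(2*(1+x))))
        ((a/(1+d)^2) * Real.exp (-a^2/(2*(1+d)))) d := by
    intro d hd
    rw [Set.uIcc_of_le h12.le] at hd
    have hd0 : (1:ℝ)+d ≠ 0 := by
      have := hd.1; nlinarith
    have h1' : HasDerivAt (fun x : ℝ => (1:ℝ)+x) 1 d := by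
      simpa using (hasDerivAt_id d).const_add 1
    have hinv : HasDerivAt (fun x : ℝ => ((1:ℝ)+x)⁻¹) (-1/(1+d)^2) d := by
      simpa [Pi.inv_def] using h1'.inv hd0
    have hg : HasDerivAt (fun x : ℝ => -a^2/(2*(1+x)))
        (a^2/(2*(1+d)^2)) d := by
      have h := hinv.const_mul (-a^2/2)
      have heq : (fun x : ℝ => -a^2/2 * ((1:ℝ)+x)⁻¹) = fun x => -a^2/(2*(1+x)) := by
        funext x
        rcases eq_or_ne ((1:ℝ)+x) 0 with h0|h0
        · simp [h0]
        · field_simp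
      rw [heq] at h
      exact h.congr_deriv (by field_simp)
    have h := (hg.exp).const_mul (2/a)
    exact h.congr_deriv (by field_simp)
  have hcont : ContinuousOn (fun d => (a/(1+d)^2) * Real.exp (-a^2/(2*(1+d))))
      (Set.uIcc d₁ d₂) := by
    rw [Set.uIcc_of_le h12.le]
    have hd0 : ∀ d ∈ Set.Icc d₁ d₂, ((1:ℝ)+d)^2 ≠ 0 := by
      intro d hd; have h := hd.1; have : (0:ℝ) < 1+d := by linarith
      positivity
    have hd0' : ∀ d ∈ Set.Icc d₁ d₂, (2:ℝ)*(1+d) ≠ 0 := by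
      intro d hd; have h := hd.1; have : (0:ℝ) < 1+d := by linarith
      positivity
    exact ((continuousOn_const.div (by fun_prop) hd0).mul
      ((continuousOn_const.div (by fun_prop) hd0').rexp))
  rw [intervalIntegral.integral_eq_sub_of_hasDerivAt hderiv
    (hcont.intervalIntegrable)]
  field_simp
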